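/- Let n ≥ 1 be an integer and let V ∈ L¹(ℝⁿ;ℝ) ∩ L²(ℝⁿ;ℝ). Suppose there is a constant C such that for all 0 < t ≤ 1: ∫_0^1 ∫_{ℝⁿ} ((1 − e^{−t v(1−v)|ξ|²}) / t) |V̂(ξ)|² dξ dv ≤ C. Then ∫_{ℝⁿ} |ξ|² |V̂(ξ)|² dξ ≤ 6C. -/

import Mathlib

open MeasureTheory Real Filter Topology

/-- The Fourier transform `V̂(ξ) = ∫ e^{-i⟨x,ξ⟩} V(x) dx`. -/
noncomputable def fourierV (n : ℕ) (V : EuclideanSpace ℝ (Fin n) → ℝ)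
    (ξ : EuclideanSpace ℝ (Fin n)) : ℂ :=
  ∫ x, Complex.exp (-Complex.I * ((inner ℝ x ξ : ℝ) : ℂ)) * (V x : ℂ)

lemma fourierV_continuous (n : ℕ) (V : EuclideanSpace ℝ (Fin n) → ℝ)
    (hV1 : Integrable V) : Continuous (fourierV n V) := by
  have hc : ∀ x : EuclideanSpace ℝ (Fin n),
      Continuous fun ξ : EuclideanSpace ℝ (Fin n) =>
        Complex.exp (-Complex.I * ((inner ℝ x ξ : ℝ) : ℂ)) := by
    intro x
    exact Complex.continuous_exp.comp
      (continuous_const.mul (Complex.continuous_ofReal.comp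
        (continuous_const.inner continuous_id)))
  have hc' : ∀ ξ : EuclideanSpace ℝ (Fin n),
      Continuous fun x : EuclideanSpace ℝ (Fin n) =>
        Complex.exp (-Complex.I * ((inner ℝ x ξ : ℝ) : ℂ)) := by
    intro ξ
    exact Complex.continuous_exp.comp
      (continuous_const.mul (Complex.continuous_ofReal.comp
        (continuous_id.inner continuous_const)))
  apply continuous_of_dominated
    (F := fun ξ x => Complex.exp (-Complex.I * ((inner ℝ x ξ : ℝ) : ℂ)) * (V x : ℂ))
    (bound := fun x => |V x|)
  · intro ξ
    exact ((hc' ξ).aestronglyMeasurable).mul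
      (Complex.continuous_ofReal.comp_aestronglyMeasurable hV1.1)
  · intro ξ
    filter_upwards with x
    simp [Complex.norm_exp]
  · exact hV1.abs
  · filter_upwards with x
    exact (hc x).mul continuous_const

lemma slope_tendsto (c : ℝ) :
    Tendsto (fun k : ℕ => (1 - Real.exp (-((1:ℝ)/(k+1)) * c)) / ((1:ℝ)/(k+1))) atTop (𝓝 c) := by
  have hd : HasDerivAt (fun s : ℝ => 1 - Real.exp (-(s * c))) c 0 := by
    have h1 : HasDerivAt (fun s : ℝ => s * c) c 0 := hasDerivAt_mul_const c
    have h2 := (h1.neg).exp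
    simpa using h2.const_sub 1
  have hs := hasDerivAt_iff_tendsto_slope.mp hd
  have ht : Tendsto (fun k : ℕ => (1:ℝ)/(k+1)) atTop (𝓝[≠] (0:ℝ)) := by
    apply tendsto_nhdsWithin_of_tendsto_nhds_of_eventually_within
    · exact tendsto_one_div_add_atTop_nhds_zero_nat
    · filter_upwards with k
      have : (0:ℝ) < 1/(k+1) := by positivity
      exact ne_of_gt this
  have h := hs.comp ht
  refine h.congr fun k => ?_
  have hk : ((1:ℝ)/(k+1)) ≠ 0 := by positivity
  simp only [Function.comp, slope_def_field]
  norm_num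

/-- if `V ∈ L¹ ∩ L²(ℝⁿ;ℝ)` and
`∫₀¹ ∫ ((1 - e^{-t v(1-v)|ξ|²})/t) |V̂(ξ)|² dξ dv ≤ C` for all `0 < t ≤ 1`, then
`∫ |ξ|² |V̂(ξ)|² dξ ≤ 6C`. -/
theorem statement11 (n : ℕ) (hn : 1 ≤ n) (V : EuclideanSpace ℝ (Fin n) → ℝ)
    (hV1 : Integrable V) (hV2 : MemLp V 2 volume) (C : ℝ)
    (hbd : ∀ t : ℝ, 0 < t → t ≤ 1 →
      ∫⁻ v in Set.Ioo (0 : ℝ) 1, ∫⁻ ξ : EuclideanSpace ℝ (Fin n),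
          ENNReal.ofReal (((1 - Real.exp (-t * v * (1 - v) * ‖ξ‖ ^ 2)) / t) *
            ‖fourierV n V ξ‖ ^ 2) ≤ ENNReal.ofReal C) :
    ∫⁻ ξ : EuclideanSpace ℝ (Fin n),
        ENNReal.ofReal (‖ξ‖ ^ 2 * ‖fourierV n V ξ‖ ^ 2) ≤
      ENNReal.ofReal (6 * C) := by
  set g  : EuclideanSpace ℝ (Fin n) → ℝ := fun ξ => ‖fourierV n V ξ‖ ^ 2 with hg_def
  have hg : Measurable g :=
    ((continuous_norm.comp (fourierV_continuous n V hV1)).pow 2).measurable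
  have hg0 : ∀ ξ, 0 ≤ g ξ := fun ξ => by positivity
  set I := ∫⁻ ξ : EuclideanSpace ℝ (Fin n), ENNReal.ofReal (‖ξ‖ ^ 2 * g ξ) with hI_def
  set t : ℕ → ℝ := fun k => (1:ℝ)/(k+1) with ht_def
  have ht_pos : ∀ k, 0 < t k := fun k => by positivity
  have ht_le : ∀ k, t k ≤ 1 := by
    intro k
    rw [ht_def]
    rw [div_le_one (by positivity)]
    linarith [Nat.cast_nonneg (α := ℝ) k]
  -- the family of integrands
  set f : ℕ → ℝ → EuclideanSpace ℝ (Fin n) → ENNReal := fun k v ξ =>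
    ENNReal.ofReal (((1 - Real.exp (-(t k) * v * (1 - v) * ‖ξ‖ ^ 2)) / (t k)) * g ξ) with hf_def
  have hf_meas : ∀ k v, Measurable (f k v) := by
    intro k v
    apply Measurable.ennreal_ofReal
    exact (((continuous_const.sub (Real.continuous_exp.comp
      (continuous_const.mul ((continuous_norm).pow 2)))).div_const (t k)).measurable).mul hg
  have hF_meas : ∀ k, Measurable fun v => ∫⁻ ξ, f k v ξ := by
    intro k
    have huncurry : Measurable (Function.uncurry (f k)) := by
      apply Measurable.ennreal_ofReal
      refine Measurable.mul ?_ (hg.comp measurable_snd)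
      apply Continuous.measurable
      apply Continuous.div_const
      apply continuous_const.sub
      apply Real.continuous_exp.comp
      continuity
    exact huncurry.lintegral_prod_right
  -- pointwise convergence
  have hpt : ∀ v ∈ Set.Ioo (0:ℝ) 1, ∀ ξ : EuclideanSpace ℝ (Fin n),
      Tendsto (fun k => f k v ξ) atTop (𝓝 (ENNReal.ofReal (v * (1 - v) * ‖ξ‖ ^ 2 * g ξ))) := by
    intro v hv ξ
    apply (ENNReal.continuous_ofReal.tendsto _).comp
    have h := (slope_tendsto (v * (1 - v) * ‖ξ‖ ^ 2)).mul_const (g ξ)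
    refine h.congr fun k => ?_
    congr 2
    simp only [ht_def]
    ring
  -- Step A: twice Fatou
  have hA : ∫⁻ v in Set.Ioo (0:ℝ) 1, ∫⁻ ξ : EuclideanSpace ℝ (Fin n),
      ENNReal.ofReal (v * (1 - v) * ‖ξ‖ ^ 2 * g ξ) ≤ ENNReal.ofReal C := by
    have inner_le : ∀ v ∈ Set.Ioo (0:ℝ) 1,
        ∫⁻ ξ : EuclideanSpace ℝ (Fin n), ENNReal.ofReal (v * (1 - v) * ‖ξ‖ ^ 2 * g ξ)
          ≤ liminf (fun k => ∫⁻ ξ, f k v ξ) atTop := by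
      intro v hv
      have : ∫⁻ ξ : EuclideanSpace ℝ (Fin n), ENNReal.ofReal (v * (1 - v) * ‖ξ‖ ^ 2 * g ξ)
          = ∫⁻ ξ : EuclideanSpace ℝ (Fin n), liminf (fun k => f k v ξ) atTop := by
        apply lintegral_congr
        intro ξ
        exact ((hpt v hv ξ).liminf_eq).symm
      rw [this]
      exact lintegral_liminf_le' fun k => (hf_meas k v).aemeasurable
    calc ∫⁻ v in Set.Ioo (0:ℝ) 1, ∫⁻ ξ : EuclideanSpace ℝ (Fin n), ENNReal.ofReal (v * (1 - v) * ‖ξ‖ ^ 2 * g ξ)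
        ≤ ∫⁻ v in Set.Ioo (0:ℝ) 1, liminf (fun k => ∫⁻ ξ, f k v ξ) atTop := by
          apply lintegral_mono_ae
          filter_upwards [ae_restrict_mem measurableSet_Ioo] with v hv
          exact inner_le v hv
      _ ≤ liminf (fun k => ∫⁻ v in Set.Ioo (0:ℝ) 1, ∫⁻ ξ, f k v ξ) atTop :=
          lintegral_liminf_le' fun k => ((hF_meas k).aemeasurable)
      _ ≤ liminf (fun _ : ℕ => ENNReal.ofReal C) atTop := by
          refine liminf_le_liminf ?_ ?_ ?_
          · filter_upwards with k
            exact hbd (t k) (ht_pos k) (ht_le k)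
          · isBoundedDefault
          · isBoundedDefault
      _ = ENNReal.ofReal C := liminf_const _
  -- Step B: factor out
  have hrw : ∀ v ∈ Set.Ioo (0:ℝ) 1,
      ∫⁻ ξ : EuclideanSpace ℝ (Fin n), ENNReal.ofReal (v * (1 - v) * ‖ξ‖ ^ 2 * g ξ)
        = ENNReal.ofReal (v * (1 - v)) * I := by
    intro v hv
    rw [hI_def, ← lintegral_const_mul' _ _ ENNReal.ofReal_ne_top]
    apply lintegral_congr
    intro ξ
    rw [← ENNReal.ofReal_mul (mul_nonneg hv.1.le (by linarith [hv.2]))]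
    ring_nf
  have hBody : ∫⁻ v in Set.Ioo (0:ℝ) 1, ∫⁻ ξ : EuclideanSpace ℝ (Fin n), ENNReal.ofReal (v * (1 - v) * ‖ξ‖ ^ 2 * g ξ)
      = ENNReal.ofReal (1/6) * I := by
    have : ∫⁻ v in Set.Ioo (0:ℝ) 1, ∫⁻ ξ : EuclideanSpace ℝ (Fin n), ENNReal.ofReal (v * (1 - v) * ‖ξ‖ ^ 2 * g ξ)
        = ∫⁻ v in Set.Ioo (0:ℝ) 1, ENNReal.ofReal (v * (1 - v)) * I := by
      apply lintegral_congr_ae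
      filter_upwards [ae_restrict_mem measurableSet_Ioo] with v hv
      exact hrw v hv
    rw [this]
    have hmeas : AEMeasurable (fun v : ℝ => ENNReal.ofReal (v * (1 - v)))
        (volume.restrict (Set.Ioo (0:ℝ) 1)) :=
      ((continuous_id.mul (continuous_const.sub continuous_id)).measurable.ennreal_ofReal).aemeasurable
    have h6 : ∫⁻ v in Set.Ioo (0:ℝ) 1, ENNReal.ofReal (v * (1 - v)) = ENNReal.ofReal (1/6) := by
      rw [← ofReal_integral_eq_lintegral_ofReal]
      · congr 1
        rw [← MeasureTheory.integral_Ioc_eq_integral_Ioo,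
          ← intervalIntegral.integral_of_le (by norm_num : (0:ℝ) ≤ 1)]
        have h : ∀ x : ℝ, x * (1 - x) = x - x^2 := by intro x; ring
        simp_rw [h]
        have h1 : IntervalIntegrable (fun x : ℝ => x) volume 0 1 :=
          (continuous_id).intervalIntegrable 0 1
        have h2 : IntervalIntegrable (fun x : ℝ => x ^ 2) volume 0 1 :=
          (continuous_pow 2).intervalIntegrable 0 1
        rw [intervalIntegral.integral_sub h1 h2]
        rw [integral_id, integral_pow]
        norm_num
      · exact ((continuous_id.mul (continuous_const.sub continuous_id)).integrableOn_Icc).mono_set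
          Set.Ioo_subset_Icc_self
      · filter_upwards [ae_restrict_mem measurableSet_Ioo] with v hv
        exact mul_nonneg hv.1.le (by linarith [hv.2])
    calc ∫⁻ v in Set.Ioo (0:ℝ) 1, ENNReal.ofReal (v * (1 - v)) * I
        = (∫⁻ v in Set.Ioo (0:ℝ) 1, ENNReal.ofReal (v * (1 - v))) * I :=
          lintegral_mul_const'' I hmeas
      _ = ENNReal.ofReal (1/6) * I := by rw [h6]
  rw [hBody] at hA
  -- final algebra
  have key : I = ENNReal.ofReal 6 * (ENNReal.ofReal (1/6) * I) := by
    rw [← mul_assoc, ← ENNReal.ofReal_mul (by norm_num : (0:ℝ) ≤ 6)]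
    norm_num
  calc I = ENNReal.ofReal 6 * (ENNReal.ofReal (1/6) * I) := key
    _ ≤ ENNReal.ofReal 6 * ENNReal.ofReal C := by
        exact mul_le_mul_right hA _
    _ = ENNReal.ofReal (6 * C) := (ENNReal.ofReal_mul (by norm_num)).symm
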